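/- Let p1, p2, p3, p4, p5 be real numbers and define H(l) = l⁵ + p1·l⁴ + p2·l³ + p3·l² + p4·l + p5, a1 = −(6/25)·p1² + (3/5)·p2, b1 = −(6/25)·p1·p2 + (2/5)·p3 + (8/125)·p1³, c1 = −(3/625)·p1⁴ + (3/125)·p1²·p2 − (2/25)·p1·p3 + (1/5)·p4, and Δ0 = a1² − 4·c1. If p5 ≥ 0, b1 = 0, and Δ0 < 0, then H has no positive real root. -/

import Mathlib

theorem stmt7 (p1 p2 p3 p4 p5 : ℝ)
    (H : ℝ → ℝ)
    (hH : ∀ l, H l = l ^ 5 + p1 * l ^ 4 + p2 * l ^ 3 + p3 * l ^ 2 + p4 * l + p5)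
    (a1 b1 c1 Δ0 : ℝ)
    (ha1 : a1 = -(6/25) * p1 ^ 2 + (3/5) * p2)
    (hb1 : b1 = -(6/25) * p1 * p2 + (2/5) * p3 + (8/125) * p1 ^ 3)
    (hc1 : c1 = -(3/625) * p1 ^ 4 + (3/125) * p1 ^ 2 * p2 - (2/25) * p1 * p3 + (1/5) * p4)
    (hΔ0 : Δ0 = a1 ^ 2 - 4 * c1)
    (hp5 : 0 ≤ p5) (hb10 : b1 = 0) (hΔ0neg : Δ0 < 0) :
    ∀ l : ℝ, 0 < l → H l ≠ 0 := by
  intro l hl hHl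
  have hfun : H = fun x : ℝ => x ^ 5 + p1 * x ^ 4 + p2 * x ^ 3 + p3 * x ^ 2 + p4 * x + p5 :=
    funext hH
  have hderiv : ∀ x : ℝ,
      HasDerivAt H (5 * x ^ 4 + 4 * p1 * x ^ 3 + 3 * p2 * x ^ 2 + 2 * p3 * x + p4) x := by
    intro x
    rw [hfun]
    have h := (((((hasDerivAt_pow 5 x).add ((hasDerivAt_pow 4 x).const_mul p1)).add
      ((hasDerivAt_pow 3 x).const_mul p2)).add
      ((hasDerivAt_pow 2 x).const_mul p3)).add
      ((hasDerivAt_id x).const_mul p4)).add_const p5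
    convert h using 1
    · rfl
    · rfl
    · rfl
    · norm_num
      ring
  have hpos : ∀ x : ℝ, 0 < 5 * x ^ 4 + 4 * p1 * x ^ 3 + 3 * p2 * x ^ 2 + 2 * p3 * x + p4 := by
    intro x
    have hid : 5 * x ^ 4 + 4 * p1 * x ^ 3 + 3 * p2 * x ^ 2 + 2 * p3 * x + p4
        = 5 * ((x + p1 / 5) ^ 2 + a1 / 2) ^ 2 - (5 / 4) * Δ0 := by
      rw [hΔ0, ha1, hc1]
      have hb : -(6/25) * p1 * p2 + (2/5) * p3 + (8/125) * p1 ^ 3 = 0 := hb1 ▸ hb10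
      linear_combination (5 * x + p1) * hb
    nlinarith [sq_nonneg ((x + p1 / 5) ^ 2 + a1 / 2)]
  have hmono : StrictMonoOn H (Set.Ici (0 : ℝ)) := by
    apply strictMonoOn_of_deriv_pos (convex_Ici 0)
    · exact (continuous_iff_continuousAt.2 fun x =>
        (hderiv x).differentiableAt.continuousAt).continuousOn
    · intro x _
      rw [(hderiv x).deriv]
      exact hpos x
  have h0 : H 0 = p5 := by rw [hH]; ring
  have := hmono (Set.self_mem_Ici) (Set.mem_Ici.2 hl.le) hl
  rw [h0, hHl] at this
  linarith
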